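/- (Quantum teleportation identity) Let α, β ∈ ℂ, let ψ = (α, β) : Fin 2 → ℂ, and let v : (Fin 2 × Fin 2 × Fin 2) → ℂ be the three-qubit vector v(i,j,k) = ψ i · φ₊(j,k), where φ₊ = (|01⟩+|10⟩)/√2. Let M = (H ⊗ₖ I ⊗ₖ I) * (CNOT ⊗ₖ I) as an 8×8 complex matrix. Then M.mulVec v = (1/2) • ( |00⟩⊗(β,α) + |01⟩⊗(α,β) + |10⟩⊗(−β,α) + |11⟩⊗(α,−β) ), where |q₀q₁⟩⊗w denotes the vector (i,j,k) ↦ [i=q₀][j=q₁]·w k. In words: after Alice's CNOT and Hadamard, the three-qubit state is an equal superposition of her four measurement outcomes, each paired with Bob's qubit in a state that is a fixed Pauli correction of ψ. -/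

import Mathlib

open Matrix Kronecker

/-- The Hadamard gate `H = (1/√2)!![1,1;1,-1]`. -/
noncomputable def Hgate : Matrix (Fin 2) (Fin 2) ℂ :=
  ((1 / Real.sqrt 2 : ℝ) : ℂ) • !![1, 1; 1, -1]

/-- The CNOT gate on two qubits (first factor control, second target):
it maps the basis vector `|i,j⟩` to `|i, i⊕j⟩`. -/
noncomputable def CNOT : Matrix (Fin 2 × Fin 2) (Fin 2 × Fin 2) ℂ :=
  Matrix.of fun p q => if p.1 = q.1 ∧ p.2 = q.1 + q.2 then 1 else 0

/-- The standard basis vector `|ij⟩` of the two-qubit space. -/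
noncomputable def ket (i j : Fin 2) : Fin 2 × Fin 2 → ℂ :=
  fun p => if p = (i, j) then 1 else 0

/-- The Bell state `φ₊ = (|01⟩ + |10⟩)/√2`. -/
noncomputable def phiPlus : Fin 2 × Fin 2 → ℂ :=
  ((1 / Real.sqrt 2 : ℝ) : ℂ) • (ket 0 1 + ket 1 0)

/-- The three-qubit vector `|q₀q₁⟩ ⊗ w`, i.e. `(i,j,k) ↦ [i=q₀][j=q₁]·w k`. -/
noncomputable def ket3 (q₀ q₁ : Fin 2) (w : Fin 2 → ℂ) : Fin 2 × Fin 2 × Fin 2 → ℂ :=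
  fun p => (if p.1 = q₀ then 1 else 0) * (if p.2.1 = q₁ then 1 else 0) * w p.2.2

/-- Alice's teleportation operation `M = (H ⊗ I ⊗ I) * (CNOT ⊗ I)` as an 8×8 matrix
on the three-qubit space `Fin 2 × Fin 2 × Fin 2`. -/
noncomputable def M : Matrix (Fin 2 × Fin 2 × Fin 2) (Fin 2 × Fin 2 × Fin 2) ℂ :=
  (Matrix.reindex (Equiv.prodAssoc (Fin 2) (Fin 2) (Fin 2))
      (Equiv.prodAssoc (Fin 2) (Fin 2) (Fin 2))
      ((Hgate ⊗ₖ (1 : Matrix (Fin 2) (Fin 2) ℂ)) ⊗ₖ (1 : Matrix (Fin 2) (Fin 2) ℂ))) *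
  (Matrix.reindex (Equiv.prodAssoc (Fin 2) (Fin 2) (Fin 2))
      (Equiv.prodAssoc (Fin 2) (Fin 2) (Fin 2))
      (CNOT ⊗ₖ (1 : Matrix (Fin 2) (Fin 2) ℂ)))

/-- **Quantum teleportation identity**: after Alice's CNOT and Hadamard, the
three-qubit state `ψ ⊗ φ₊` becomes an equal superposition of her four
measurement outcomes, each paired with Bob's qubit in a fixed Pauli
correction of `ψ = (α, β)`. -/
theorem quantum_teleportation (α β : ℂ) :
    M.mulVec (fun p => ![α, β] p.1 * phiPlus p.2) =
      (1/2 : ℂ) • (ket3 0 0 ![β, α] + ket3 0 1 ![α, β]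
        + ket3 1 0 ![-β, α] + ket3 1 1 ![α, -β]) := by
  have h2 : ((Real.sqrt 2 : ℝ) : ℂ) * ((Real.sqrt 2 : ℝ) : ℂ) = 2 := by
    rw [← Complex.ofReal_mul, Real.mul_self_sqrt (by norm_num)]
    norm_num
  funext ⟨i, j, k⟩
  fin_cases i <;> fin_cases j <;> fin_cases k <;>
    simp [M, Matrix.mulVec, Matrix.mul_apply, dotProduct, Fintype.sum_prod_type,
      Fin.sum_univ_two, Hgate, CNOT, ket, ket3, phiPlus, Matrix.one_apply,
      Matrix.kroneckerMap_apply, Prod.ext_iff] <;>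
  field_simp <;> ring_nf <;>
  rw [sq, h2]
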